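/- Let G be a group whose cardinality κ = |G| is a singular cardinal. Then G cannot be partitioned into two κ-thick subsets; that is, there is no pair of disjoint subsets A, B with A ∪ B = G such that both A and B are κ-thick. -/

import Mathlib

open scoped Pointwise
open Cardinal

universe u

variable {G : Type u}

/-- `A` is left `κ`-large: `G = F * A` for some `F` with `|F| < κ`. -/
def LeftLarge [Group G] (κ : Cardinal.{u}) (A : Set G) : Prop :=
  ∃ F : Set G, #F < κ ∧ F * A = Set.univ

/-- `A` is right `κ`-large: `G = A * F` for some `F` with `|F| < κ`. -/
def RightLarge [Group G] (κ : Cardinal.{u}) (A : Set G) : Prop :=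
  ∃ F : Set G, #F < κ ∧ A * F = Set.univ

/-- `A` is `κ`-large: `G = F * A * F` for some `F` with `|F| < κ`. -/
def KLarge [Group G] (κ : Cardinal.{u}) (A : Set G) : Prop :=
  ∃ F : Set G, #F < κ ∧ F * A * F = Set.univ

/-- `A` is left `κ`-thick: for every `F` with `|F| < κ` there is `a ∈ A` with `F * a ⊆ A`. -/
def LeftThick [Group G] (κ : Cardinal.{u}) (A : Set G) : Prop :=
  ∀ F : Set G, #F < κ → ∃ a ∈ A, F * {a} ⊆ A

/-- `A` is right `κ`-thick: for every `F` with `|F| < κ` there is `a ∈ A` with `a * F ⊆ A`. -/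
def RightThick [Group G] (κ : Cardinal.{u}) (A : Set G) : Prop :=
  ∀ F : Set G, #F < κ → ∃ a ∈ A, {a} * F ⊆ A

/-- `A` is `κ`-thick: for every `F` with `|F| < κ` there is `a ∈ A` with `F * a * F ⊆ A`. -/
def KThick [Group G] (κ : Cardinal.{u}) (A : Set G) : Prop :=
  ∀ F : Set G, #F < κ → ∃ a ∈ A, F * {a} * F ⊆ A

/-- `G` is `κ`-normal: every subset of size `< κ` lies in a normal subgroup of size `< κ`. -/
def KNormal (G : Type u) [Group G] (κ : Cardinal.{u}) : Prop :=
  ∀ F : Set G, #F < κ → ∃ H : Subgroup G, H.Normal ∧ #(H : Set G) < κ ∧ F ⊆ (H : Set G)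

/-- `κ` is a singular cardinal: infinite, with cofinality strictly less than `κ`. -/
def Singular (κ : Cardinal.{u}) : Prop := ℵ₀ ≤ κ ∧ κ.ord.cof < κ

/-- A group of singular cardinality `κ` cannot be partitioned
into two `κ`-thick subsets. -/
theorem no_partition_into_two_thick_of_singular {G : Type u} [Group G]
    (κ : Cardinal.{u}) (hκ : #G = κ) (hsing : Singular κ) :
    ¬ ∃ A B : Set G, Disjoint A B ∧ A ∪ B = Set.univ ∧ KThick κ A ∧ KThick κ B := by
  rintro ⟨A, B, hdisj, hunion, hA, hB⟩
  obtain ⟨hinf, hcof⟩ := hsing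
  have hmk : #G = #κ.ord.ToType := by rw [hκ, Cardinal.mk_toType, Cardinal.card_ord]
  obtain ⟨e⟩ := Cardinal.eq.mp hmk
  haveI : IsWellOrder κ.ord.ToType (· < ·) := isWellOrder_lt
  obtain ⟨S, hSu, hScard⟩ := Order.exists_cof_eq κ.ord.ToType
  rw [Ordinal.cof_toType] at hScard
  -- the covering family
  set F : κ.ord.ToType → Set G := fun j => insert 1 (e ⁻¹' Set.Iic j) with hF
  have hFcard : ∀ j, #(F j) < κ := by
    intro j
    have h1 : #(e ⁻¹' Set.Iic j : Set G) ≤ #(Set.Iic j) :=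
      Cardinal.mk_preimage_of_injective e _ e.injective
    have h2 : #(Set.Iic j) ≤ #(Set.Iio j) + 1 := by
      have : Set.Iic j = insert j (Set.Iio j) := by
        ext x; simp [le_iff_lt_or_eq, or_comm]
      rw [this]; exact Cardinal.mk_insert_le
    have h3 : #(Set.Iio j) < κ := Cardinal.mk_Iio_ord_toType j
    have h4 : #(Set.Iic j) < κ := h2.trans_lt (Cardinal.add_lt_of_lt hinf h3 (lt_of_lt_of_le Cardinal.one_lt_aleph0 hinf))
    calc #(F j) ≤ #(e ⁻¹' Set.Iic j : Set G) + 1 := Cardinal.mk_insert_le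
      _ ≤ #(Set.Iic j) + 1 := by exact add_le_add_left h1 1
      _ < κ := Cardinal.add_lt_of_lt hinf h4 (lt_of_lt_of_le Cardinal.one_lt_aleph0 hinf)
  choose a ha haF using fun j : S => hA (F j.1) (hFcard j.1)
  set E : Set G := insert 1 (Set.range a) with hE
  have hEcard : #E < κ := by
    have h1 : #(Set.range a) ≤ #S := Cardinal.mk_range_le
    calc #E ≤ #(Set.range a) + 1 := Cardinal.mk_insert_le
      _ ≤ #S + 1 := add_le_add_left h1 1
      _ < κ := Cardinal.add_lt_of_lt hinf (hScard ▸ hcof) (lt_of_lt_of_le Cardinal.one_lt_aleph0 hinf)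
  obtain ⟨b, hb, hbE⟩ := hB E hEcard
  obtain ⟨j, hjS, hj⟩ := hSu (e b)
  have hbj : e b ≤ j := hj
  have hbF : b ∈ F j := Set.mem_insert_of_mem _ (by simpa using hbj)
  set jj : S := ⟨j, hjS⟩
  have hAmem : b * a jj ∈ A := by
    have : b * a jj * 1 ∈ F j * {a jj} * F j :=
      Set.mul_mem_mul (Set.mul_mem_mul hbF rfl) (Set.mem_insert _ _)
    rw [mul_one] at this
    exact haF jj this
  have hBmem : b * a jj ∈ B := by
    have : (1 : G) * b * a jj ∈ E * {b} * E :=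
      Set.mul_mem_mul (Set.mul_mem_mul (Set.mem_insert _ _) rfl)
        (Set.mem_insert_of_mem _ (Set.mem_range_self jj))
    rw [one_mul] at this
    exact hbE this
  exact Set.disjoint_left.mp hdisj hAmem hBmem
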